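/- Let k be a commutative ring and P, Q, R unital associative k-algebras. Let U ∈ P ⊗ R, X ∈ P ⊗ Q, and Y ∈ Q ⊗ R all be invertible. Write τ for the canonical flip algebra isomorphisms interchanging the two tensor factors, and set Û := τ(U⁻¹) ∈ R ⊗ P, X̂ := τ(Y⁻¹) ∈ R ⊗ Q, Ŷ := τ(X⁻¹) ∈ Q ⊗ P. Then the equation U₁₃Y₂₃ = X₁₂⁻¹ Y₂₃ X₁₂ holds in P ⊗ Q ⊗ R if and only if the equation Û₁₃Ŷ₂₃ = X̂₁₂⁻¹ Ŷ₂₃ X̂₁₂ holds in R ⊗ Q ⊗ P. -/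

import Mathlib

set_option maxHeartbeats 1000000


open TensorProduct

/-- Let `P`, `Q`, `R` be unital associative algebras over a
commutative ring `k`, and let `U ∈ P ⊗ R`, `X ∈ P ⊗ Q`, `Y ∈ Q ⊗ R` be invertible.
With `Û := τ(U⁻¹)`, `X̂ := τ(Y⁻¹)`, `Ŷ := τ(X⁻¹)` (where `τ` denotes the flip of the
two tensor factors), the equation `U₁₃Y₂₃ = X₁₂⁻¹ Y₂₃ X₁₂` in `P ⊗ Q ⊗ R` holds if
and only if `Û₁₃Ŷ₂₃ = X̂₁₂⁻¹ Ŷ₂₃ X̂₁₂` holds in `R ⊗ Q ⊗ P`. -/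

private lemma pentagon_units_aux {M : Type*} [Monoid M] {a a' b b' c c' : M}
    (ha : a * a' = 1) (ha' : a' * a = 1) (hb : b * b' = 1) (hb' : b' * b = 1)
    (hc : c * c' = 1) (hc' : c' * c = 1) :
    a * b = c' * b * c ↔ a' * c' = b * c' * b' := by
  let ua : Mˣ := ⟨a, a', ha, ha'⟩
  let ub : Mˣ := ⟨b, b', hb, hb'⟩
  let uc : Mˣ := ⟨c, c', hc, hc'⟩
  have e1 : a * b = c' * b * c ↔ ua * ub = uc⁻¹ * ub * uc := by
    rw [Units.ext_iff]; rfl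
  have e2 : a' * c' = b * c' * b' ↔ ua⁻¹ * uc⁻¹ = ub * uc⁻¹ * ub⁻¹ := by
    rw [Units.ext_iff]; rfl
  rw [e1, e2]
  constructor
  · intro h
    have h' : ua * ub * uc⁻¹ = uc⁻¹ * ub := by rw [h]; group
    calc ua⁻¹ * uc⁻¹ = ua⁻¹ * (uc⁻¹ * ub) * ub⁻¹ := by group
      _ = ua⁻¹ * (ua * ub * uc⁻¹) * ub⁻¹ := by rw [h']
      _ = ub * uc⁻¹ * ub⁻¹ := by group
  · intro h
    have h' : ua⁻¹ * uc⁻¹ * ub = ub * uc⁻¹ := by rw [h]; group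
    calc ua * ub = ua * (ub * uc⁻¹) * uc := by group
      _ = ua * (ua⁻¹ * uc⁻¹ * ub) * uc := by rw [h']
      _ = uc⁻¹ * ub * uc := by group

section Flip

variable (k : Type*) [CommRing k]
  (P : Type*) [Ring P] [Algebra k P]
  (Q : Type*) [Ring Q] [Algebra k Q]
  (R : Type*) [Ring R] [Algebra k R]

/-- The flip `p ⊗ (q ⊗ r) ↦ r ⊗ (q ⊗ p)`. -/
noncomputable def flip13 : (P ⊗[k] (Q ⊗[k] R)) ≃ₐ[k] (R ⊗[k] (Q ⊗[k] P)) :=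
  (Algebra.TensorProduct.congr AlgEquiv.refl (Algebra.TensorProduct.comm k Q R)).trans
    ((Algebra.TensorProduct.comm k P (R ⊗[k] Q)).trans
      (Algebra.TensorProduct.assoc k k k R Q P))

variable {k P Q R}

lemma flip13_tmul (p : P) (q : Q) (r : R) :
    flip13 k P Q R (p ⊗ₜ[k] (q ⊗ₜ[k] r)) = r ⊗ₜ[k] (q ⊗ₜ[k] p) := by
  simp [flip13, Algebra.TensorProduct.congr_apply, Algebra.TensorProduct.assoc_tmul]

lemma flip13_map_right (Z : P ⊗[k] R) :
    flip13 k P Q R (Algebra.TensorProduct.map (AlgHom.id k P)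
        (Algebra.TensorProduct.includeRight : R →ₐ[k] Q ⊗[k] R) Z)
      = Algebra.TensorProduct.map (AlgHom.id k R)
        (Algebra.TensorProduct.includeRight : P →ₐ[k] Q ⊗[k] P)
        (Algebra.TensorProduct.comm k P R Z) := by
  induction Z using TensorProduct.induction_on with
  | zero => simp
  | tmul p r => simp [flip13_tmul]
  | add x y hx hy => simp only [map_add, hx, hy]

lemma flip13_inc_right (Z : Q ⊗[k] R) :
    flip13 k P Q R ((Algebra.TensorProduct.includeRight :
        Q ⊗[k] R →ₐ[k] P ⊗[k] (Q ⊗[k] R)) Z)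
      = Algebra.TensorProduct.map (AlgHom.id k R)
        (Algebra.TensorProduct.includeLeft : Q →ₐ[k] Q ⊗[k] P)
        (Algebra.TensorProduct.comm k Q R Z) := by
  induction Z using TensorProduct.induction_on with
  | zero => simp
  | tmul q r => simp [flip13_tmul]
  | add x y hx hy => simp only [map_add, hx, hy]

lemma flip13_map_left (Z : P ⊗[k] Q) :
    flip13 k P Q R (Algebra.TensorProduct.map (AlgHom.id k P)
        (Algebra.TensorProduct.includeLeft : Q →ₐ[k] Q ⊗[k] R) Z)
      = (Algebra.TensorProduct.includeRight : Q ⊗[k] P →ₐ[k] R ⊗[k] (Q ⊗[k] P))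
        (Algebra.TensorProduct.comm k P Q Z) := by
  induction Z using TensorProduct.induction_on with
  | zero => simp
  | tmul p q => simp [flip13_tmul]
  | add x y hx hy => simp only [map_add, hx, hy]

end Flip

theorem pentagon_covariance_duality
    (k : Type*) [CommRing k]
    (P : Type*) [Ring P] [Algebra k P]
    (Q : Type*) [Ring Q] [Algebra k Q]
    (R : Type*) [Ring R] [Algebra k R]
    (U Uinv : P ⊗[k] R) (hUr : U * Uinv = 1) (hUl : Uinv * U = 1)
    (X Xinv : P ⊗[k] Q) (hXr : X * Xinv = 1) (hXl : Xinv * X = 1)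
    (Y Yinv : Q ⊗[k] R) (hYr : Y * Yinv = 1) (hYl : Yinv * Y = 1) :
    -- `U₁₃ Y₂₃ = X₁₂⁻¹ Y₂₃ X₁₂` in `P ⊗ (Q ⊗ R)`
    (Algebra.TensorProduct.map (AlgHom.id k P)
          (Algebra.TensorProduct.includeRight : R →ₐ[k] Q ⊗[k] R) U *
        (Algebra.TensorProduct.includeRight : Q ⊗[k] R →ₐ[k] P ⊗[k] (Q ⊗[k] R)) Y =
      Algebra.TensorProduct.map (AlgHom.id k P)
          (Algebra.TensorProduct.includeLeft : Q →ₐ[k] Q ⊗[k] R) Xinv *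
        (Algebra.TensorProduct.includeRight : Q ⊗[k] R →ₐ[k] P ⊗[k] (Q ⊗[k] R)) Y *
        Algebra.TensorProduct.map (AlgHom.id k P)
          (Algebra.TensorProduct.includeLeft : Q →ₐ[k] Q ⊗[k] R) X)
    ↔
    -- `Û₁₃ Ŷ₂₃ = X̂₁₂⁻¹ Ŷ₂₃ X̂₁₂` in `R ⊗ (Q ⊗ P)`, where
    -- `Û = τ(U⁻¹)`, `Ŷ = τ(X⁻¹)`, `X̂ = τ(Y⁻¹)` and hence `X̂⁻¹ = τ(Y)`
    (Algebra.TensorProduct.map (AlgHom.id k R)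
          (Algebra.TensorProduct.includeRight : P →ₐ[k] Q ⊗[k] P)
          (Algebra.TensorProduct.comm k P R Uinv) *
        (Algebra.TensorProduct.includeRight : Q ⊗[k] P →ₐ[k] R ⊗[k] (Q ⊗[k] P))
          (Algebra.TensorProduct.comm k P Q Xinv) =
      Algebra.TensorProduct.map (AlgHom.id k R)
          (Algebra.TensorProduct.includeLeft : Q →ₐ[k] Q ⊗[k] P)
          (Algebra.TensorProduct.comm k Q R Y) *
        (Algebra.TensorProduct.includeRight : Q ⊗[k] P →ₐ[k] R ⊗[k] (Q ⊗[k] P))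
          (Algebra.TensorProduct.comm k P Q Xinv) *
        Algebra.TensorProduct.map (AlgHom.id k R)
          (Algebra.TensorProduct.includeLeft : Q →ₐ[k] Q ⊗[k] P)
          (Algebra.TensorProduct.comm k Q R Yinv)) := by
  
  set F1 := Algebra.TensorProduct.map (AlgHom.id k P)
    (Algebra.TensorProduct.includeRight : R →ₐ[k] Q ⊗[k] R) with hF1
  set F2 := Algebra.TensorProduct.map (AlgHom.id k P)
    (Algebra.TensorProduct.includeLeft : Q →ₐ[k] Q ⊗[k] R) with hF2
  set G1 := (Algebra.TensorProduct.includeRight : Q ⊗[k] R →ₐ[k] P ⊗[k] (Q ⊗[k] R)) with hG1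
  have step1 : (F1 U * G1 Y = F2 Xinv * G1 Y * F2 X) ↔
      (F1 Uinv * F2 Xinv = G1 Y * F2 Xinv * G1 Yinv) := by
    refine pentagon_units_aux ?_ ?_ ?_ ?_ ?_ ?_
    · rw [← map_mul, hUr, map_one]
    · rw [← map_mul, hUl, map_one]
    · rw [← map_mul, hYr, map_one]
    · rw [← map_mul, hYl, map_one]
    · rw [← map_mul, hXr, map_one]
    · rw [← map_mul, hXl, map_one]
  rw [step1]
  constructor
  · intro h
    have := congrArg (flip13 k P Q R) h
    simpa only [hF1, hF2, hG1, map_mul, flip13_map_right, flip13_inc_right, flip13_map_left] using this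
  · intro h
    apply (flip13 k P Q R).injective
    simpa only [hF1, hF2, hG1, map_mul, flip13_map_right, flip13_inc_right, flip13_map_left] using h
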